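/- Let M be a real symmetric negative definite n×n matrix with Mᵢⱼ ≥ 0 for all i ≠ j. Then all entries of M⁻¹ are ≤ 0. Moreover if the graph with edges {i,j : Mᵢⱼ > 0} is connected, then all entries of M⁻¹ are strictly negative. -/

import Mathlib

open Matrix Finset

/-- Key lemma: if `A` is positive definite with nonpositive off-diagonal entries and
`A *ᵥ x = Pi.single j 1`, then `x` is nonnegative. -/
lemma aux_nonneg {n : ℕ} (A : Matrix (Fin n) (Fin n) ℝ) (hA : A.PosDef)
    (hoff : ∀ i k : Fin n, i ≠ k → A i k ≤ 0) (j : Fin n) (x : Fin n → ℝ)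
    (hx : A *ᵥ x = Pi.single j 1) : ∀ i, 0 ≤ x i := by
  set y : Fin n → ℝ := fun i => max (-(x i)) 0 with hy
  set z : Fin n → ℝ := fun i => max (x i) 0 with hz
  have hyz : ∀ i, y i * z i = 0 := by
    intro i
    rcases le_total (x i) 0 with h | h
    · have : z i = 0 := by simp [hz, h]
      rw [this, mul_zero]
    · have : y i = 0 := by simp [hy, h]
      rw [this, zero_mul]
  have hzxy : z = x + y := by
    funext i
    rcases le_total (x i) 0 with h | h
    · simp [hz, hy, h, neg_nonneg.mpr h]
    · simp [hz, hy, h, neg_nonpos.mpr h]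
  have hynn : ∀ i, 0 ≤ y i := fun i => le_max_right _ _
  have hznn : ∀ i, 0 ≤ z i := fun i => le_max_right _ _
  -- y ⬝ᵥ A *ᵥ z ≤ 0
  have h1 : y ⬝ᵥ (A *ᵥ z) ≤ 0 := by
    simp only [dotProduct, mulVec]
    refine Finset.sum_nonpos fun i _ => ?_
    rw [Finset.mul_sum]
    refine Finset.sum_nonpos fun k _ => ?_
    rcases eq_or_ne i k with rfl | hik
    · have : y i * (A i i * z i) = A i i * (y i * z i) := by ring
      rw [this, hyz, mul_zero]
    · exact mul_nonpos_of_nonneg_of_nonpos (hynn i)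
        (mul_nonpos_of_nonpos_of_nonneg (hoff i k hik) (hznn k))
  have h2 : y ⬝ᵥ (A *ᵥ x) = y j := by
    rw [hx, dotProduct_single, mul_one]
  have h3 : y ⬝ᵥ (A *ᵥ y) ≤ 0 := by
    have : y ⬝ᵥ (A *ᵥ z) = y ⬝ᵥ (A *ᵥ x) + y ⬝ᵥ (A *ᵥ y) := by
      rw [hzxy, mulVec_add, dotProduct_add]
    have hyj : 0 ≤ y j := hynn j
    linarith [h1, h2 ▸ this]
  have hy0 : y = 0 := by
    by_contra hy0
    have := hA.dotProduct_mulVec_pos hy0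
    simp only [star_trivial] at this
    linarith
  intro i
  have : y i = 0 := by rw [hy0]; rfl
  have : max (-(x i)) 0 = 0 := this
  by_contra hxi
  push_neg at hxi
  have : -(x i) ≤ 0 := le_of_max_le_left (le_of_eq this)
  linarith

lemma aux_pos {n : ℕ} (A : Matrix (Fin n) (Fin n) ℝ) (hA : A.PosDef)
    (hAs : ∀ i k : Fin n, A i k = A k i)
    (hoff : ∀ i k : Fin n, i ≠ k → A i k ≤ 0) (j : Fin n) (x : Fin n → ℝ)
    (hx : A *ᵥ x = Pi.single j 1)
    (hconn : (SimpleGraph.fromRel (fun i k : Fin n => A i k < 0)).Connected) :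
    ∀ i, 0 < x i := by
  have hnn := aux_nonneg A hA hoff j x hx
  -- x j > 0
  have hxne : x ≠ 0 := by
    intro h
    rw [h, mulVec_zero] at hx
    have := congrFun hx j
    simp at this
  have hxj : 0 < x j := by
    have h := hA.dotProduct_mulVec_pos hxne
    simp only [star_trivial] at h
    rw [hx, dotProduct_single, mul_one] at h
    exact h
  -- propagation of zeros
  have hstep : ∀ i : Fin n, x i = 0 → ∀ k : Fin n, A i k < 0 → x k = 0 := by
    intro i hi k hik
    have hsum : ∑ l, A i l * x l = (Pi.single j 1 : Fin n → ℝ) i := by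
      have := congrFun hx i
      simpa [mulVec, dotProduct] using this
    have hterm : ∀ l ∈ Finset.univ, A i l * x l ≤ 0 := by
      intro l _
      rcases eq_or_ne i l with rfl | hil
      · rw [hi, mul_zero]
      · exact mul_nonpos_of_nonpos_of_nonneg (hoff i l hil) (hnn l)
    have hsnn : (0 : ℝ) ≤ ∑ l, A i l * x l := by
      rw [hsum]
      rcases eq_or_ne i j with rfl | h
      · simp
      · simp [Pi.single_eq_of_ne h]
    have hall : ∀ l ∈ Finset.univ, A i l * x l = 0 :=
      (Finset.sum_eq_zero_iff_of_nonpos hterm).mp (le_antisymm (Finset.sum_nonpos hterm) hsnn)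
    have := hall k (Finset.mem_univ k)
    rcases mul_eq_zero.mp this with h | h
    · exact absurd h (ne_of_lt hik)
    · exact h
  -- walk induction
  intro i
  rcases lt_or_eq_of_le (hnn i) with h | h
  · exact h
  -- x i = 0, derive contradiction via connectivity
  exfalso
  set G := SimpleGraph.fromRel (fun i k : Fin n => A i k < 0) with hG
  obtain ⟨w⟩ := hconn.preconnected i j
  have hwalk : ∀ {u v : Fin n}, G.Walk u v → x u = 0 → x v = 0 := by
    intro u v w
    induction w with
    | nil => exact id
    | cons hadj p ih =>
      intro hu
      refine ih ?_
      obtain ⟨hne, hor⟩ := hadj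
      rcases hor with hlt | hlt
      · exact hstep _ hu _ hlt
      · exact hstep _ hu _ (by rw [hAs]; exact hlt)
  have := hwalk w h.symm
  linarith

/-- If `M` is a real symmetric negative definite matrix with nonnegative off-diagonal
entries, then all entries of `M⁻¹` are `≤ 0`; moreover, if the graph with an edge
between `i ≠ j` iff `M i j > 0` is connected, then all entries of `M⁻¹` are `< 0`. -/
theorem stmt6 {n : ℕ} (M : Matrix (Fin n) (Fin n) ℝ) (hsymm : M.IsSymm)
    (hnegdef : (-M).PosDef) (hoff : ∀ i j : Fin n, i ≠ j → 0 ≤ M i j) :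
    (∀ i j : Fin n, M⁻¹ i j ≤ 0) ∧
      ((SimpleGraph.fromRel (fun i j : Fin n => 0 < M i j)).Connected →
        ∀ i j : Fin n, M⁻¹ i j < 0) := by
  set A := -M with hA
  have hApd : A.PosDef := hnegdef
  have hAoff : ∀ i k : Fin n, i ≠ k → A i k ≤ 0 := by
    intro i k h
    simp only [hA, Matrix.neg_apply, neg_nonpos]
    exact hoff i k h
  have hAs : ∀ i k : Fin n, A i k = A k i := by
    intro i k
    have := congrFun (congrFun hsymm k) i
    simp only [hA, Matrix.neg_apply, Matrix.transpose_apply] at *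
    rw [this]
  have hAdet : IsUnit A.det := isUnit_iff_ne_zero.mpr (ne_of_gt hApd.det_pos)
  have hMinv : M⁻¹ = -(A⁻¹) := by
    apply Matrix.inv_eq_right_inv
    have : M * -A⁻¹ = A * A⁻¹ := by
      rw [hA]; noncomm_ring
    rw [this, Matrix.mul_nonsing_inv A hAdet]
  -- column of A⁻¹
  have hcol : ∀ j, A *ᵥ (fun i => A⁻¹ i j) = Pi.single j 1 := by
    intro j
    have : (fun i => A⁻¹ i j) = A⁻¹ *ᵥ Pi.single j 1 := by
      funext i; simp
    rw [this, mulVec_mulVec, Matrix.mul_nonsing_inv A hAdet, one_mulVec]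
  constructor
  · intro i j
    rw [hMinv]
    simp only [Matrix.neg_apply, neg_nonpos]
    exact aux_nonneg A hApd hAoff j _ (hcol j) i
  · intro hconn i j
    rw [hMinv]
    simp only [Matrix.neg_apply, neg_lt_zero]
    have hgeq : (SimpleGraph.fromRel (fun i k : Fin n => 0 < M i k)) =
        (SimpleGraph.fromRel (fun i k : Fin n => A i k < 0)) := by
      ext u v
      simp [SimpleGraph.fromRel_adj, hA]
    rw [hgeq] at hconn
    exact aux_pos A hApd hAs hAoff j _ (hcol j) hconn i
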